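/- Let V be a finite set, Z ⊆ V, and let h : 2^V → ℝ be a normal polymatroid. Define h', h'' : 2^V → ℝ by h'(U) = h(U ∩ Z) and h''(U) = h(U) − h(U ∩ Z) for all U ⊆ V (i.e., h''(U) = h(U | U ∩ Z)). Then both h' and h'' are normal polymatroids on 2^V. -/
import Mathlib


/-- A set function `h : 2^V → ℝ` on a finite set `V` is a *normal polymatroid* if
`h(∅) = 0` and for every `U ⊆ V`, `Σ_{W ⊆ U} (−1)^{|W|+1} h(W) ≥ 0`. -/
def IsNormalPolymatroid {V : Type*} [DecidableEq V] (h : Finset V → ℝ) : Prop :=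
  h ∅ = 0 ∧ ∀ U : Finset V, 0 ≤ ∑ W ∈ U.powerset, (-1 : ℝ) ^ (W.card + 1) * h W

lemma key_cancel {V : Type*} [DecidableEq V] (h : Finset V → ℝ) (Z U : Finset V)
    (x : V) (hxU : x ∈ U) (hxZ : x ∉ Z) :
    ∑ W ∈ U.powerset, (-1 : ℝ) ^ (W.card + 1) * h (W ∩ Z) = 0 := by
  have hU : U = insert x (U.erase x) := (Finset.insert_erase hxU).symm
  have hx' : x ∉ U.erase x := Finset.notMem_erase x U
  rw [hU, Finset.sum_powerset_insert hx']
  have : ∑ W ∈ (U.erase x).powerset, (-1 : ℝ) ^ ((insert x W).card + 1) * h ((insert x W) ∩ Z)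
      = ∑ W ∈ (U.erase x).powerset, -((-1 : ℝ) ^ (W.card + 1) * h (W ∩ Z)) := by
    apply Finset.sum_congr rfl
    intro W hW
    have hxW : x ∉ W := fun hxw => hx' (Finset.mem_powerset.mp hW hxw)
    rw [Finset.card_insert_of_notMem hxW, Finset.insert_inter_of_notMem hxZ]
    ring
  rw [this, Finset.sum_neg_distrib]
  ring

/-- If `h` is a normal polymatroid on a finite set `V` and `Z ⊆ V`, then both
`h'(U) = h(U ∩ Z)` and `h''(U) = h(U) − h(U ∩ Z) = h(U | U ∩ Z)` are normal
polymatroids on `V`. -/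
theorem normal_polymatroid_restrict_and_conditional {V : Type*}
    [Fintype V] [DecidableEq V]
    (Z : Finset V) (h : Finset V → ℝ) (hh : IsNormalPolymatroid h) :
    IsNormalPolymatroid (fun U => h (U ∩ Z))
      ∧ IsNormalPolymatroid (fun U => h U - h (U ∩ Z)) := by
  obtain ⟨h0, hsum⟩ := hh
  have hcases : ∀ U : Finset V,
      (∑ W ∈ U.powerset, (-1 : ℝ) ^ (W.card + 1) * h (W ∩ Z))
        = if U ⊆ Z then ∑ W ∈ U.powerset, (-1 : ℝ) ^ (W.card + 1) * h W else 0 := by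
    intro U
    by_cases hUZ : U ⊆ Z
    · rw [if_pos hUZ]
      apply Finset.sum_congr rfl
      intro W hW
      rw [Finset.inter_eq_left.mpr ((Finset.mem_powerset.mp hW).trans hUZ)]
    · rw [if_neg hUZ]
      obtain ⟨x, hxU, hxZ⟩ := Finset.not_subset.mp hUZ
      exact key_cancel h Z U x hxU hxZ
  refine ⟨⟨by simp [h0], fun U => ?_⟩, ⟨by simp [h0], fun U => ?_⟩⟩
  · rw [hcases U]
    split
    · exact hsum U
    · exact le_refl 0
  · have : ∑ W ∈ U.powerset, (-1 : ℝ) ^ (W.card + 1) * (h W - h (W ∩ Z))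
        = (∑ W ∈ U.powerset, (-1 : ℝ) ^ (W.card + 1) * h W)
          - ∑ W ∈ U.powerset, (-1 : ℝ) ^ (W.card + 1) * h (W ∩ Z) := by
      rw [← Finset.sum_sub_distrib]
      apply Finset.sum_congr rfl; intros; ring
    rw [this, hcases U]
    split
    · simp
    · simpa using hsum U
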